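/- Consider n agents whose closed-loop dynamics over a switching communication graph are q̈_i(t) = −k q̇_i(t) − Σ_{j=1}^n a_{ij}(t)(q_i(t) − q_j(t)) − (q_i(t) − P_{X_i}(q_i(t))), q_i(t) ∈ ℝ^m, where X_1, …, X_n are closed convex sets whose intersection X₀ = ∩_{i=1}^n X_i is nonempty and bounded, and the weights a_{ij}(t) satisfy the switching-weight assumptions with bounds 0 < a_* ≤ a^*. If k > 2 + (n−1)a^*/2, then every solution achieves local target aggregation: lim_{t→∞} ‖q_i(t)‖_{X_i} = 0 and lim_{t→∞} q̇_i(t) = 0 for every i ∈ {1, …, n}. -/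

import Mathlib

open scoped Topology BigOperators RealInnerProductSpace
open Filter

section proj
variable {E : Type*} [NormedAddCommGroup E] [InnerProductSpace ℝ E]

lemma aux_vi {X : Set E} (hconv : Convex ℝ X) {x p : E} (hp : p ∈ X)
    (hmin : ∀ y ∈ X, ‖x - p‖ ≤ ‖x - y‖) : ∀ y ∈ X, ⟪x - p, y - p⟫ ≤ 0 := by
  have hne : Nonempty X := ⟨⟨p, hp⟩⟩
  have h : ‖x - p‖ = ⨅ w : X, ‖x - (w : E)‖ := by
    refine le_antisymm (le_ciInf fun w => hmin w w.2) ?_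
    refine ciInf_le ⟨(0 : ℝ), ?_⟩ (⟨p, hp⟩ : X)
    rintro b ⟨w, rfl⟩; exact norm_nonneg _
  exact (norm_eq_iInf_iff_real_inner_le_zero hconv hp).mp h

lemma aux_nonexp {x y px py : E} (h1 : ⟪x - px, py - px⟫ ≤ 0)
    (h2 : ⟪y - py, px - py⟫ ≤ 0) : ‖px - py‖ ≤ ‖x - y‖ := by
  have expand : ⟪x - px, py - px⟫ + ⟪y - py, px - py⟫
      = ⟪x - y, py - px⟫ + ⟪px - py, px - py⟫ := by
    simp only [inner_sub_left, inner_sub_right]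
    simp [real_inner_comm]
    ring
  have key : ⟪px - py, px - py⟫ ≤ ⟪x - y, px - py⟫ := by
    have h3 : ⟪x - y, py - px⟫ = -⟪x - y, px - py⟫ := by
      rw [← inner_neg_right]; congr 1; abel
    nlinarith [add_nonpos h1 h2]
  have h4 : ‖px - py‖ ^ 2 ≤ ‖x - y‖ * ‖px - py‖ := by
    calc ‖px - py‖ ^ 2 = ⟪px - py, px - py⟫ := (real_inner_self_eq_norm_sq _).symm
    _ ≤ ⟪x - y, px - py⟫ := key
    _ ≤ ‖x - y‖ * ‖px - py‖ := real_inner_le_norm _ _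
  rcases eq_or_lt_of_le (norm_nonneg (px - py)) with h0 | h0
  · rw [← h0]; exact norm_nonneg _
  · have := (pow_two (‖px - py‖)) ▸ h4
    nlinarith
lemma aux_coercive {x p x₀ : E} (h : ⟪x - p, x₀ - p⟫ ≤ 0) :
    ‖x - p‖ ^ 2 ≤ ⟪x - p, x - x₀⟫ := by
  have : ⟪x - p, x - x₀⟫ = ⟪x - p, x - p⟫ - ⟪x - p, x₀ - p⟫ := by
    rw [← inner_sub_right]; congr 1; abel
  rw [this, real_inner_self_eq_norm_sq]
  linarith
end proj

lemma aux_barbalat (G : ℝ → ℝ) (t₀ I L : ℝ) (hL : 0 < L)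
    (h0 : ∀ t, 0 ≤ G t)
    (hlip : ∀ s t : ℝ, |G s - G t| ≤ L * |s - t|)
    (hint : ∀ T, t₀ ≤ T → (∫ t in t₀..T, G t) ≤ I) :
    Tendsto G atTop (𝓝 0) := by
  have hcont : Continuous G := by
    refine LipschitzWith.continuous (K := ⟨L, hL.le⟩) ?_
    refine LipschitzWith.of_dist_le_mul fun s t => ?_
    rw [Real.dist_eq, Real.dist_eq]
    exact hlip s t
  have hIntg : ∀ a b : ℝ, IntervalIntegrable G MeasureTheory.volume a b :=
    fun a b => hcont.intervalIntegrable a b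
  set H : ℝ → ℝ := fun T => ∫ t in t₀..T, G t with hH
  have hHadd : ∀ a b : ℝ, H b = H a + ∫ t in a..b, G t := by
    intro a b
    rw [hH]
    simp only
    rw [← intervalIntegral.integral_add_adjacent_intervals (hIntg t₀ a) (hIntg a b)]
  have hmono : Monotone H := by
    intro a b hab
    have h1 : (0:ℝ) ≤ ∫ t in a..b, G t :=
      intervalIntegral.integral_nonneg hab (fun x _ => h0 x)
    have := hHadd a b
    linarith
  have hH0 : H t₀ = 0 := by simp [hH]
  have hbdd : ∀ T, H T ≤ max I 0 := by
    intro T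
    rcases le_total t₀ T with h | h
    · exact le_max_of_le_left (hint T h)
    · have := hmono h
      rw [hH0] at this
      exact le_max_of_le_right this
  have hbdd' : BddAbove (Set.range H) := ⟨max I 0, by rintro b ⟨T, rfl⟩; exact hbdd T⟩
  set ℓ : ℝ := ⨆ T, H T with hℓ
  have hHtend : Tendsto H atTop (𝓝 ℓ) := tendsto_atTop_ciSup hmono hbdd'
  have hHle : ∀ t, H t ≤ ℓ := fun t => le_ciSup hbdd' t
  have key : ∀ t, G t ^ 2 ≤ 2 * L * (ℓ - H t) := by
    intro t
    set δ : ℝ := G t / L with hδdef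
    have hδ : 0 ≤ δ := div_nonneg (h0 t) hL.le
    have hlin : ∀ s ∈ Set.Icc t (t + δ), G t + L * t - L * s ≤ G s := by
      intro s hs
      have h1 : G t - G s ≤ |G t - G s| := le_abs_self _
      have h2 : |G t - G s| ≤ L * |t - s| := hlip t s
      have h3 : |t - s| = s - t := by
        rw [abs_sub_comm, abs_of_nonneg]; linarith [hs.1]
      rw [h3] at h2
      nlinarith
    have hintlow : (∫ s in t..(t + δ), (G t + L * t - L * s)) ≤ ∫ s in t..(t + δ), G s := by
      refine intervalIntegral.integral_mono_on (by linarith) ?_ (hIntg _ _) hlin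
      exact (Continuous.intervalIntegrable (by continuity) _ _)
    have hcomp : (∫ s in t..(t + δ), (G t + L * t - L * s)) = G t ^ 2 / (2 * L) := by
      rw [intervalIntegral.integral_sub (by apply Continuous.intervalIntegrable; continuity)
        (by apply Continuous.intervalIntegrable; continuity)]
      rw [intervalIntegral.integral_const, intervalIntegral.integral_const_mul, integral_id]
      simp only [smul_eq_mul]
      rw [hδdef]
      have hL' : L ≠ 0 := ne_of_gt hL
      field_simp
      ring
    have hHd : H (t + δ) = H t + ∫ s in t..(t + δ), G s := hHadd t (t + δ)
    have := hHle (t + δ)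
    rw [hcomp] at hintlow
    have h4 : G t ^ 2 / (2 * L) ≤ ℓ - H t := by linarith
    calc G t ^ 2 = 2 * L * (G t ^ 2 / (2 * L)) := by field_simp
    _ ≤ 2 * L * (ℓ - H t) := by nlinarith
  have hbarb : ∀ t, G t ≤ Real.sqrt (2 * L * (ℓ - H t)) := by
    intro t
    calc G t = Real.sqrt (G t ^ 2) := (Real.sqrt_sq (h0 t)).symm
    _ ≤ Real.sqrt (2 * L * (ℓ - H t)) := Real.sqrt_le_sqrt (key t)
  have htend0 : Tendsto (fun t => 2 * L * (ℓ - H t)) atTop (𝓝 0) := by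
    have h1 : Tendsto (fun t => ℓ - H t) atTop (𝓝 (ℓ - ℓ)) :=
      tendsto_const_nhds.sub hHtend
    have h2 := h1.const_mul (2 * L)
    simpa using h2
  have hsq : Tendsto (fun t => Real.sqrt (2 * L * (ℓ - H t))) atTop (𝓝 0) := by
    have := htend0.sqrt
    simpa using this
  exact squeeze_zero h0 hbarb hsq

set_option maxHeartbeats 1000000 in
/-- Local target aggregation for the switching-graph closed loop
`q̈ᵢ = -k q̇ᵢ - ∑ⱼ aᵢⱼ(t)(qᵢ - qⱼ) - (qᵢ - P_{Xᵢ}(qᵢ))` with `k > 2 + (n-1)a*/2`. -/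
theorem statement1
    (m n : ℕ) (hn : 0 < n)
    -- the local target sets
    (X : Fin n → Set (EuclideanSpace ℝ (Fin m)))
    (hXclosed : ∀ i, IsClosed (X i))
    (hXconvex : ∀ i, Convex ℝ (X i))
    (hX0ne : (⋂ i, X i).Nonempty)
    (hX0bdd : Bornology.IsBounded (⋂ i, X i))
    -- the Euclidean projections onto the local target sets
    (P : Fin n → EuclideanSpace ℝ (Fin m) → EuclideanSpace ℝ (Fin m))
    (hPmem : ∀ i x, P i x ∈ X i)
    (hPproj : ∀ i x, ∀ y ∈ X i, ‖x - P i x‖ ≤ ‖x - y‖)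
    -- switching times with dwell time `τd`, starting at `t₀`
    (t₀ τd : ℝ) (hτd : 0 < τd)
    (times : ℕ → ℝ) (htimes0 : times 0 = t₀)
    (hdwell : ∀ l, times l + τd ≤ times (l + 1))
    -- the time-varying weights: symmetric, nonnegative, bounded on their support
    (a : Fin n → Fin n → ℝ → ℝ)
    (ha_symm : ∀ i j t, a i j t = a j i t)
    (ha_nonneg : ∀ i j t, 0 ≤ a i j t)
    (alow ahigh : ℝ) (halow : 0 < alow) (hahigh : alow ≤ ahigh)
    (hbounds : ∀ i j t, t₀ ≤ t → a i j t ≠ 0 → alow ≤ a i j t ∧ a i j t ≤ ahigh)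
    -- continuity between switching times, and constant zero/nonzero pattern there
    (hcont : ∀ i j l, ContinuousOn (a i j) (Set.Ico (times l) (times (l + 1))))
    (hpattern : ∀ i j l, ∀ s ∈ Set.Ico (times l) (times (l + 1)),
      ∀ t ∈ Set.Ico (times l) (times (l + 1)), (a i j s ≠ 0 ↔ a i j t ≠ 0))
    -- gain condition `k > 2 + (n-1)a*/2`
    (k : ℝ) (hk : 2 + (n - 1 : ℝ) * ahigh / 2 < k)
    -- a C² solution of the closed-loop system on `[t₀, ∞)`
    (q : Fin n → ℝ → EuclideanSpace ℝ (Fin m))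
    (hq : ∀ i, ContDiff ℝ 2 (q i))
    (hODE : ∀ i t, t₀ ≤ t →
      deriv (deriv (q i)) t
        = -k • deriv (q i) t - (∑ j, a i j t • (q i t - q j t))
          - (q i t - P i (q i t))) :
    (∀ i, Filter.Tendsto (fun t => Metric.infDist (q i t) (X i)) Filter.atTop (𝓝 0)) ∧
    (∀ i, Filter.Tendsto (deriv (q i)) Filter.atTop (𝓝 0)) := by
  classical
  obtain ⟨x₀, hx₀mem⟩ := hX0ne
  have hx₀ : ∀ i, x₀ ∈ X i := fun i => Set.mem_iInter.mp hx₀mem i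
  -- basic positivity facts
  have hn1 : (0:ℝ) ≤ (n:ℝ) - 1 := by
    have : (1:ℝ) ≤ (n:ℝ) := by exact_mod_cast hn
    linarith
  have hahigh0 : (0:ℝ) ≤ ahigh := le_trans halow.le hahigh
  have hk2 : (2:ℝ) < k := by nlinarith
  have hkpos : (0:ℝ) < k := by linarith
  -- smoothness facts
  have h2 : ∀ i, ContDiff ℝ ((1:WithTop ℕ∞)+1) (q i) := fun i => by
    have := hq i; norm_num at this ⊢; exact this
  have hqdiff : ∀ i, Differentiable ℝ (q i) := fun i => (contDiff_succ_iff_deriv.mp (h2 i)).1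
  have hvdiff : ∀ i, Differentiable ℝ (deriv (q i)) := fun i =>
    (contDiff_one_iff_deriv.mp (contDiff_succ_iff_deriv.mp (h2 i)).2.2).1
  have hwcont : ∀ i, Continuous (deriv (deriv (q i))) := fun i =>
    (contDiff_one_iff_deriv.mp (contDiff_succ_iff_deriv.mp (h2 i)).2.2).2
  have hvcont : ∀ i, Continuous (deriv (q i)) := fun i => (hvdiff i).continuous
  have hqcont : ∀ i, Continuous (q i) := fun i => (hqdiff i).continuous
  -- projection facts
  have hVI : ∀ i x, ∀ y ∈ X i, ⟪x - P i x, y - P i x⟫ ≤ 0 := fun i x =>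
    aux_vi (hXconvex i) (hPmem i x) (hPproj i x)
  have hPlip : ∀ i x y, ‖P i x - P i y‖ ≤ ‖x - y‖ := fun i x y =>
    aux_nonexp (hVI i x _ (hPmem i y)) (hVI i y _ (hPmem i x))
  have hPcont : ∀ i, Continuous (P i) := by
    intro i
    refine LipschitzWith.continuous (K := 1) (LipschitzWith.of_dist_le_mul fun x y => ?_)
    rw [dist_eq_norm, dist_eq_norm]
    simpa using hPlip i x y
  have hcoer : ∀ i x, ‖x - P i x‖^2 ≤ ⟪x - P i x, x - x₀⟫ := fun i x =>
    aux_coercive (hVI i x x₀ (hx₀ i))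
  have hfle : ∀ i x, ‖x - P i x‖ ≤ ‖x - x₀‖ := fun i x => hPproj i x x₀ (hx₀ i)
  have hflip : ∀ i x y, ‖(x - P i x) - (y - P i y)‖ ≤ 2 * ‖x - y‖ := by
    intro i x y
    calc ‖(x - P i x) - (y - P i y)‖ = ‖(x - y) + (P i y - P i x)‖ := by congr 1; abel
    _ ≤ ‖x - y‖ + ‖P i y - P i x‖ := norm_add_le _ _
    _ ≤ ‖x - y‖ + ‖y - x‖ := by linarith [hPlip i y x]
    _ = 2 * ‖x - y‖ := by rw [norm_sub_rev]; ring
  -- the Lyapunov function and its derivative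
  set G : ℝ → ℝ := fun t => ∑ i, (‖deriv (q i) t‖^2 + ‖q i t - P i (q i t)‖^2) with hGdef
  set V : ℝ → ℝ := fun t => ∑ i, ((1:ℝ)/2 * ⟪deriv (q i) t, deriv (q i) t⟫
    + ⟪q i t - x₀, deriv (q i) t⟫ + k/2 * ⟪q i t - x₀, q i t - x₀⟫) with hVdef
  set Vd : ℝ → ℝ := fun t => ∑ i, (⟪deriv (q i) t, deriv (deriv (q i)) t⟫
    + ⟪deriv (q i) t, deriv (q i) t⟫ + ⟪q i t - x₀, deriv (deriv (q i)) t⟫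
    + k * ⟪q i t - x₀, deriv (q i) t⟫) with hVddef
  have hGnn : ∀ t, 0 ≤ G t := by
    intro t; apply Finset.sum_nonneg; intro i _; positivity
  have hGsingle : ∀ i t, ‖deriv (q i) t‖^2 + ‖q i t - P i (q i t)‖^2 ≤ G t := by
    intro i t
    exact Finset.single_le_sum (f := fun i => ‖deriv (q i) t‖^2 + ‖q i t - P i (q i t)‖^2)
      (fun j _ => by positivity) (Finset.mem_univ i)
  have hVD : ∀ t, HasDerivAt V (Vd t) t := by
    intro t
    rw [hVdef, hVddef]
    refine HasDerivAt.fun_sum fun i _ => ?_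
    have hqi : HasDerivAt (q i) (deriv (q i) t) t := ((hqdiff i) t).hasDerivAt
    have hvi : HasDerivAt (deriv (q i)) (deriv (deriv (q i)) t) t := ((hvdiff i) t).hasDerivAt
    have hei : HasDerivAt (fun s => q i s - x₀) (deriv (q i) t) t := hqi.sub_const x₀
    have T1 := (HasDerivAt.inner ℝ hvi hvi).const_mul ((1:ℝ)/2)
    have T2 := HasDerivAt.inner ℝ hei hvi
    have T3 := (HasDerivAt.inner ℝ hei hei).const_mul (k/2)
    have hcomb := (T1.add T2).add T3
    convert hcomb using 1
    · rfl
    rw [real_inner_comm (deriv (deriv (q i)) t) (deriv (q i) t),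
      real_inner_comm (deriv (q i) t) (q i t - x₀)]
    ring
  have ha_le : ∀ i j t, t₀ ≤ t → a i j t ≤ ahigh := by
    intro i j t ht
    by_cases h : a i j t = 0
    · rw [h]; exact hahigh0
    · exact (hbounds i j t ht h).2
  have hVd_le : ∀ t, t₀ ≤ t → Vd t ≤ -(1/2) * G t := by
    intro t ht
    have hexp : ∀ i : Fin n,
        ⟪deriv (q i) t, deriv (deriv (q i)) t⟫ + ⟪deriv (q i) t, deriv (q i) t⟫
          + ⟪q i t - x₀, deriv (deriv (q i)) t⟫ + k * ⟪q i t - x₀, deriv (q i) t⟫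
        = (1 - k) * ‖deriv (q i) t‖^2
          - ⟪deriv (q i) t, ∑ j, a i j t • (q i t - q j t)⟫
          - ⟪deriv (q i) t, q i t - P i (q i t)⟫
          - ⟪q i t - x₀, ∑ j, a i j t • (q i t - q j t)⟫
          - ⟪q i t - x₀, q i t - P i (q i t)⟫ := by
      intro i
      rw [hODE i t ht]
      simp only [inner_sub_right, real_inner_smul_right, neg_smul, inner_neg_right,
        real_inner_self_eq_norm_sq]
      ring
    have hVdt : Vd t = (∑ i, ((1 - k) * ‖deriv (q i) t‖^2
          - ⟪deriv (q i) t, ∑ j, a i j t • (q i t - q j t)⟫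
          - ⟪deriv (q i) t, q i t - P i (q i t)⟫
          - ⟪q i t - x₀, q i t - P i (q i t)⟫))
        - ∑ i, ⟪q i t - x₀, ∑ j, a i j t • (q i t - q j t)⟫ := by
      simp only [hVddef]
      calc (∑ i, (⟪deriv (q i) t, deriv (deriv (q i)) t⟫ + ⟪deriv (q i) t, deriv (q i) t⟫
          + ⟪q i t - x₀, deriv (deriv (q i)) t⟫ + k * ⟪q i t - x₀, deriv (q i) t⟫))
          = ∑ i, (((1 - k) * ‖deriv (q i) t‖^2
            - ⟪deriv (q i) t, ∑ j, a i j t • (q i t - q j t)⟫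
            - ⟪deriv (q i) t, q i t - P i (q i t)⟫
            - ⟪q i t - x₀, q i t - P i (q i t)⟫)
            - ⟪q i t - x₀, ∑ j, a i j t • (q i t - q j t)⟫) :=
        Finset.sum_congr rfl fun i _ => by rw [hexp i]; ring
      _ = _ := Finset.sum_sub_distrib _ _
    have hBexp : ∀ i : Fin n, ⟪q i t - x₀, ∑ j, a i j t • (q i t - q j t)⟫
        = ∑ j, a i j t * ⟪(q i t - x₀), (q i t - x₀) - (q j t - x₀)⟫ := by
      intro i
      rw [inner_sum]
      refine Finset.sum_congr rfl fun j _ => ?_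
      rw [real_inner_smul_right]
      congr 2
      abel
    have hsym : (∑ i, ∑ j, a i j t * ⟪(q i t - x₀), (q i t - x₀) - (q j t - x₀)⟫)
        = ∑ i, ∑ j, a i j t * ⟪(q j t - x₀), (q j t - x₀) - (q i t - x₀)⟫ := by
      rw [Finset.sum_comm]
      exact Finset.sum_congr rfl fun x _ => Finset.sum_congr rfl fun y _ => by rw [ha_symm]
    have hB : (∑ i, ⟪q i t - x₀, ∑ j, a i j t • (q i t - q j t)⟫)
        = (1/2) * ∑ i, ∑ j, a i j t * ‖q i t - q j t‖^2 := by
      have h1 : (∑ i, ⟪q i t - x₀, ∑ j, a i j t • (q i t - q j t)⟫)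
          = ∑ i, ∑ j, a i j t * ⟪(q i t - x₀), (q i t - x₀) - (q j t - x₀)⟫ :=
        Finset.sum_congr rfl fun i _ => hBexp i
      have h3 : ∀ i j : Fin n, a i j t * ⟪(q i t - x₀), (q i t - x₀) - (q j t - x₀)⟫
          + a i j t * ⟪(q j t - x₀), (q j t - x₀) - (q i t - x₀)⟫
          = a i j t * ‖q i t - q j t‖^2 := by
        intro i j
        have hv : ‖q i t - q j t‖^2
            = ⟪(q i t - x₀) - (q j t - x₀), (q i t - x₀) - (q j t - x₀)⟫ := by
          rw [show (q i t - x₀) - (q j t - x₀) = q i t - q j t by abel,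
            real_inner_self_eq_norm_sq]
        have e1 : ⟪(q i t - x₀), (q i t - x₀) - (q j t - x₀)⟫
            - ⟪(q j t - x₀), (q i t - x₀) - (q j t - x₀)⟫
            = ⟪(q i t - x₀) - (q j t - x₀), (q i t - x₀) - (q j t - x₀)⟫ :=
          (inner_sub_left _ _ _).symm
        have e2 : ⟪(q j t - x₀), (q j t - x₀) - (q i t - x₀)⟫
            = -⟪(q j t - x₀), (q i t - x₀) - (q j t - x₀)⟫ := by
          rw [show (q j t - x₀) - (q i t - x₀) = -((q i t - x₀) - (q j t - x₀)) by abel,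
            inner_neg_right]
        rw [hv]
        linear_combination (a i j t) * e1 + (a i j t) * e2
      have h2 : (2:ℝ) * ∑ i, ∑ j, a i j t * ⟪(q i t - x₀), (q i t - x₀) - (q j t - x₀)⟫
          = ∑ i, ∑ j, a i j t * ‖q i t - q j t‖^2 := by
        calc (2:ℝ) * ∑ i, ∑ j, a i j t * ⟪(q i t - x₀), (q i t - x₀) - (q j t - x₀)⟫
            = (∑ i, ∑ j, a i j t * ⟪(q i t - x₀), (q i t - x₀) - (q j t - x₀)⟫)
              + ∑ i, ∑ j, a i j t * ⟪(q j t - x₀), (q j t - x₀) - (q i t - x₀)⟫ := by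
              rw [← hsym]; ring
        _ = ∑ i, ∑ j, (a i j t * ⟪(q i t - x₀), (q i t - x₀) - (q j t - x₀)⟫
              + a i j t * ⟪(q j t - x₀), (q j t - x₀) - (q i t - x₀)⟫) := by
              rw [← Finset.sum_add_distrib]
              exact Finset.sum_congr rfl fun i _ => (Finset.sum_add_distrib).symm
        _ = ∑ i, ∑ j, a i j t * ‖q i t - q j t‖^2 :=
          Finset.sum_congr rfl fun i _ => Finset.sum_congr rfl fun j _ => h3 i j
      rw [h1]; linarith
    have hA : ∀ i : Fin n, -⟪deriv (q i) t, ∑ j, a i j t • (q i t - q j t)⟫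
        ≤ ((n:ℝ)-1) * ahigh * (1/2) * ‖deriv (q i) t‖^2
          + (1/2) * ∑ j, a i j t * ‖q i t - q j t‖^2 := by
      intro i
      have hexpand : ⟪deriv (q i) t, ∑ j, a i j t • (q i t - q j t)⟫
          = ∑ j, a i j t * ⟪deriv (q i) t, q i t - q j t⟫ := by
        rw [inner_sum]
        exact Finset.sum_congr rfl fun j _ => real_inner_smul_right _ _ _
      have hdiag : a i i t * ⟪deriv (q i) t, q i t - q i t⟫ = 0 := by simp
      have hsplit : (∑ j, a i j t * ⟪deriv (q i) t, q i t - q j t⟫)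
          = ∑ j ∈ Finset.univ.erase i, a i j t * ⟪deriv (q i) t, q i t - q j t⟫ :=
        (Finset.sum_erase (f := fun j => a i j t * ⟪deriv (q i) t, q i t - q j t⟫)
          Finset.univ hdiag).symm
      have hterm : ∀ j ∈ Finset.univ.erase i,
          -(a i j t * ⟪deriv (q i) t, q i t - q j t⟫)
          ≤ a i j t * ((1/2) * ‖deriv (q i) t‖^2 + (1/2) * ‖q i t - q j t‖^2) := by
        intro j _
        have h1 : -⟪deriv (q i) t, q i t - q j t⟫ ≤ ‖deriv (q i) t‖ * ‖q i t - q j t‖ := by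
          have ha := abs_real_inner_le_norm (deriv (q i) t) (q i t - q j t)
          have hb := neg_abs_le (⟪deriv (q i) t, q i t - q j t⟫:ℝ)
          linarith
        have h2 : ‖deriv (q i) t‖ * ‖q i t - q j t‖
            ≤ (1/2) * ‖deriv (q i) t‖^2 + (1/2) * ‖q i t - q j t‖^2 := by
          nlinarith [sq_nonneg (‖deriv (q i) t‖ - ‖q i t - q j t‖)]
        have h0 := ha_nonneg i j t
        nlinarith
      have hcard : (Finset.univ.erase i).card = n - 1 := by
        rw [Finset.card_erase_of_mem (Finset.mem_univ i), Finset.card_univ, Fintype.card_fin]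
      have hsum1 : (∑ j ∈ Finset.univ.erase i, a i j t) ≤ ((n:ℝ)-1) * ahigh := by
        have hle := Finset.sum_le_card_nsmul (Finset.univ.erase i) (fun j => a i j t) ahigh
          (fun j _ => ha_le i j t ht)
        rw [hcard] at hle
        have hcast : ((n - 1 : ℕ) : ℝ) = (n:ℝ) - 1 := by
          have h1n : (1:ℕ) ≤ n := hn
          push_cast [h1n]
          ring
        rw [nsmul_eq_mul, hcast] at hle
        linarith
      calc -⟪deriv (q i) t, ∑ j, a i j t • (q i t - q j t)⟫
          = ∑ j ∈ Finset.univ.erase i, -(a i j t * ⟪deriv (q i) t, q i t - q j t⟫) := by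
            rw [hexpand, hsplit, ← Finset.sum_neg_distrib]
      _ ≤ ∑ j ∈ Finset.univ.erase i,
            a i j t * ((1/2) * ‖deriv (q i) t‖^2 + (1/2) * ‖q i t - q j t‖^2) :=
        Finset.sum_le_sum hterm
      _ = (∑ j ∈ Finset.univ.erase i, a i j t) * ((1/2) * ‖deriv (q i) t‖^2)
          + ∑ j ∈ Finset.univ.erase i, a i j t * ((1/2) * ‖q i t - q j t‖^2) := by
        rw [Finset.sum_mul, ← Finset.sum_add_distrib]
        exact Finset.sum_congr rfl fun j _ => by ring
      _ ≤ ((n:ℝ)-1) * ahigh * (1/2) * ‖deriv (q i) t‖^2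
          + (1/2) * ∑ j, a i j t * ‖q i t - q j t‖^2 := by
        have hb1 : (∑ j ∈ Finset.univ.erase i, a i j t) * ((1/2) * ‖deriv (q i) t‖^2)
            ≤ ((n:ℝ)-1) * ahigh * (1/2) * ‖deriv (q i) t‖^2 := by
          calc (∑ j ∈ Finset.univ.erase i, a i j t) * ((1/2) * ‖deriv (q i) t‖^2)
              ≤ (((n:ℝ)-1) * ahigh) * ((1/2) * ‖deriv (q i) t‖^2) :=
            mul_le_mul_of_nonneg_right hsum1 (by positivity)
          _ = ((n:ℝ)-1) * ahigh * (1/2) * ‖deriv (q i) t‖^2 := by ring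
        have hb2 : (∑ j ∈ Finset.univ.erase i, a i j t * ((1/2) * ‖q i t - q j t‖^2))
            ≤ (1/2) * ∑ j, a i j t * ‖q i t - q j t‖^2 := by
          rw [Finset.mul_sum]
          refine le_trans (Finset.sum_le_sum_of_subset_of_nonneg (Finset.subset_univ _)
            (fun j _ _ => mul_nonneg (ha_nonneg i j t) (by positivity))) ?_
          exact le_of_eq (Finset.sum_congr rfl fun j _ => by ring)
        linarith
    have hC : ∀ i : Fin n, -⟪deriv (q i) t, q i t - P i (q i t)⟫
        ≤ (1/2) * ‖deriv (q i) t‖^2 + (1/2) * ‖q i t - P i (q i t)‖^2 := by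
      intro i
      have h1 : -⟪deriv (q i) t, q i t - P i (q i t)⟫
          ≤ ‖deriv (q i) t‖ * ‖q i t - P i (q i t)‖ := by
        have ha := abs_real_inner_le_norm (deriv (q i) t) (q i t - P i (q i t))
        have hb := neg_abs_le (⟪deriv (q i) t, q i t - P i (q i t)⟫:ℝ)
        linarith
      nlinarith [sq_nonneg (‖deriv (q i) t‖ - ‖q i t - P i (q i t)‖)]
    have hD : ∀ i : Fin n, -⟪q i t - x₀, q i t - P i (q i t)⟫
        ≤ -‖q i t - P i (q i t)‖^2 := by
      intro i
      have hc := hcoer i (q i t)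
      rw [real_inner_comm] at hc
      linarith
    have hstep : (∑ i, ((1 - k) * ‖deriv (q i) t‖^2
          - ⟪deriv (q i) t, ∑ j, a i j t • (q i t - q j t)⟫
          - ⟪deriv (q i) t, q i t - P i (q i t)⟫
          - ⟪q i t - x₀, q i t - P i (q i t)⟫))
        ≤ ∑ i, ((1 - k + ((n:ℝ)-1) * ahigh * (1/2) + 1/2) * ‖deriv (q i) t‖^2
            + (1/2) * (∑ j, a i j t * ‖q i t - q j t‖^2)
            - (1/2) * ‖q i t - P i (q i t)‖^2) := by
      refine Finset.sum_le_sum fun i _ => ?_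
      have h1 := hA i
      have h2 := hC i
      have h3 := hD i
      linarith
    have hfinal : (∑ i, ((1 - k + ((n:ℝ)-1) * ahigh * (1/2) + 1/2) * ‖deriv (q i) t‖^2
            + (1/2) * (∑ j, a i j t * ‖q i t - q j t‖^2)
            - (1/2) * ‖q i t - P i (q i t)‖^2))
        = (1 - k + ((n:ℝ)-1) * ahigh * (1/2) + 1/2) * (∑ i, ‖deriv (q i) t‖^2)
          + (1/2) * (∑ i, ∑ j, a i j t * ‖q i t - q j t‖^2)
          - (1/2) * (∑ i, ‖q i t - P i (q i t)‖^2) := by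
      rw [Finset.sum_sub_distrib, Finset.sum_add_distrib, ← Finset.mul_sum,
        ← Finset.mul_sum, ← Finset.mul_sum]
    have hGsplit : G t = (∑ i, ‖deriv (q i) t‖^2) + ∑ i, ‖q i t - P i (q i t)‖^2 := by
      simp only [hGdef]
      exact Finset.sum_add_distrib
    have hSvnn : (0:ℝ) ≤ ∑ i, ‖deriv (q i) t‖^2 :=
      Finset.sum_nonneg fun i _ => by positivity
    have hco : 1 - k + ((n:ℝ)-1) * ahigh * (1/2) + 1/2 ≤ -(1:ℝ)/2 := by nlinarith
    have hmul : (1 - k + ((n:ℝ)-1) * ahigh * (1/2) + 1/2 + 1/2) * (∑ i, ‖deriv (q i) t‖^2)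
        ≤ 0 :=
      mul_nonpos_of_nonpos_of_nonneg (by linarith) hSvnn
    have h4 := hstep.trans (le_of_eq hfinal)
    rw [hVdt, hGsplit]
    nlinarith [h4, hmul]
  -- V is nonincreasing on [t₀, ∞)
  have hVdiffble : Differentiable ℝ V := fun t => (hVD t).differentiableAt
  have hVanti : AntitoneOn V (Set.Ici t₀) := by
    refine antitoneOn_of_deriv_nonpos (convex_Ici t₀) hVdiffble.continuous.continuousOn
      (hVdiffble.differentiableOn) ?_
    intro x hx
    rw [interior_Ici] at hx
    rw [(hVD x).deriv]
    have := hVd_le x (le_of_lt hx)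
    have := hGnn x
    nlinarith
  -- lower bound for V and state bounds
  have hVlowterm : ∀ i t, (1:ℝ)/4 * ‖deriv (q i) t‖^2 + (k/2 - 1) * ‖q i t - x₀‖^2
      ≤ (1:ℝ)/2 * ⟪deriv (q i) t, deriv (q i) t⟫ + ⟪q i t - x₀, deriv (q i) t⟫
        + k/2 * ⟪q i t - x₀, q i t - x₀⟫ := by
    intro i t
    have h1 : -(‖q i t - x₀‖ * ‖deriv (q i) t‖) ≤ ⟪q i t - x₀, deriv (q i) t⟫ :=
      neg_le_of_abs_le (abs_real_inner_le_norm _ _)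
    rw [real_inner_self_eq_norm_sq, real_inner_self_eq_norm_sq]
    nlinarith [sq_nonneg ((1:ℝ)/2 * ‖deriv (q i) t‖ - ‖q i t - x₀‖)]
  have hVlow : ∀ t, ∑ i, ((1:ℝ)/4 * ‖deriv (q i) t‖^2 + (k/2 - 1) * ‖q i t - x₀‖^2) ≤ V t :=
    fun t => Finset.sum_le_sum fun i _ => hVlowterm i t
  set V0 : ℝ := V t₀ with hV0def
  have hkh : (0:ℝ) ≤ k/2 - 1 := by linarith
  have hV0nn : 0 ≤ V0 := le_trans (Finset.sum_nonneg fun i _ =>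
    add_nonneg (by positivity) (mul_nonneg hkh (by positivity))) (hVlow t₀)
  have hVle : ∀ t, t₀ ≤ t → V t ≤ V0 := fun t ht =>
    hVanti (Set.self_mem_Ici) ht ht
  have hterm_le : ∀ i t, t₀ ≤ t →
      (1:ℝ)/4 * ‖deriv (q i) t‖^2 + (k/2 - 1) * ‖q i t - x₀‖^2 ≤ V0 := by
    intro i t ht
    refine le_trans ?_ (le_trans (hVlow t) (hVle t ht))
    exact Finset.single_le_sum (f := fun i => (1:ℝ)/4 * ‖deriv (q i) t‖^2
      + (k/2 - 1) * ‖q i t - x₀‖^2)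
      (fun j _ => add_nonneg (by positivity) (mul_nonneg hkh (by positivity)))
      (Finset.mem_univ i)
  set Bv : ℝ := Real.sqrt (4 * V0) with hBvdef
  set Be : ℝ := Real.sqrt (V0 / (k/2 - 1)) with hBedef
  have hBv0 : 0 ≤ Bv := Real.sqrt_nonneg _
  have hBe0 : 0 ≤ Be := Real.sqrt_nonneg _
  have hvb : ∀ i t, t₀ ≤ t → ‖deriv (q i) t‖ ≤ Bv := by
    intro i t ht
    rw [hBvdef, show ‖deriv (q i) t‖ = Real.sqrt (‖deriv (q i) t‖^2) from
      (Real.sqrt_sq (norm_nonneg _)).symm]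
    apply Real.sqrt_le_sqrt
    nlinarith [hterm_le i t ht, norm_nonneg (q i t - x₀), sq_nonneg (‖q i t - x₀‖)]
  have heb : ∀ i t, t₀ ≤ t → ‖q i t - x₀‖ ≤ Be := by
    intro i t ht
    rw [hBedef, show ‖q i t - x₀‖ = Real.sqrt (‖q i t - x₀‖^2) from
      (Real.sqrt_sq (norm_nonneg _)).symm]
    apply Real.sqrt_le_sqrt
    rw [le_div_iff₀ (by linarith : (0:ℝ) < k/2 - 1)]
    nlinarith [hterm_le i t ht, sq_nonneg (‖deriv (q i) t‖)]
  have hfb : ∀ i t, t₀ ≤ t → ‖q i t - P i (q i t)‖ ≤ Be := fun i t ht =>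
    le_trans (hfle i (q i t)) (heb i t ht)
  have hrb : ∀ i j t, t₀ ≤ t → ‖q i t - q j t‖ ≤ 2 * Be := by
    intro i j t ht
    calc ‖q i t - q j t‖ = ‖(q i t - x₀) - (q j t - x₀)‖ := by congr 1; abel
    _ ≤ ‖q i t - x₀‖ + ‖q j t - x₀‖ := norm_sub_le _ _
    _ ≤ 2 * Be := by linarith [heb i t ht, heb j t ht]
  -- bound on the acceleration
  set Cw : ℝ := k * Bv + (n:ℝ) * (ahigh * (2 * Be)) + Be with hCwdef
  have hCw0 : 0 ≤ Cw := by positivity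
  have hwb : ∀ i t, t₀ ≤ t → ‖deriv (deriv (q i)) t‖ ≤ Cw := by
    intro i t ht
    rw [hODE i t ht]
    have hu : ‖∑ j, a i j t • (q i t - q j t)‖ ≤ (n:ℝ) * (ahigh * (2 * Be)) := by
      calc ‖∑ j, a i j t • (q i t - q j t)‖ ≤ ∑ j, ‖a i j t • (q i t - q j t)‖ :=
        norm_sum_le _ _
      _ = ∑ j, a i j t * ‖q i t - q j t‖ := by
        refine Finset.sum_congr rfl fun j _ => ?_
        rw [norm_smul, Real.norm_eq_abs, abs_of_nonneg (ha_nonneg i j t)]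
      _ ≤ ∑ _j : Fin n, ahigh * (2 * Be) := by
        refine Finset.sum_le_sum fun j _ => ?_
        exact mul_le_mul (ha_le i j t ht) (hrb i j t ht) (norm_nonneg _) hahigh0
      _ = (n:ℝ) * (ahigh * (2 * Be)) := by
        rw [Finset.sum_const, Finset.card_univ, Fintype.card_fin, nsmul_eq_mul]
    have hkv : ‖-k • deriv (q i) t‖ = k * ‖deriv (q i) t‖ := by
      rw [norm_smul, Real.norm_eq_abs, abs_neg, abs_of_pos hkpos]
    calc ‖-k • deriv (q i) t - (∑ j, a i j t • (q i t - q j t)) - (q i t - P i (q i t))‖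
        ≤ ‖-k • deriv (q i) t - (∑ j, a i j t • (q i t - q j t))‖ + ‖q i t - P i (q i t)‖ :=
          norm_sub_le _ _
    _ ≤ ‖-k • deriv (q i) t‖ + ‖∑ j, a i j t • (q i t - q j t)‖ + ‖q i t - P i (q i t)‖ := by
          linarith [norm_sub_le (-k • deriv (q i) t) (∑ j, a i j t • (q i t - q j t))]
    _ ≤ k * Bv + (n:ℝ) * (ahigh * (2 * Be)) + Be := by
          rw [hkv]
          have h1 := hvb i t ht
          have h2 := hfb i t ht
          have := mul_le_mul_of_nonneg_left h1 hkpos.le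
          linarith [hu]
    _ = Cw := by rw [hCwdef]
  -- G is Lipschitz on [t₀, ∞)
  set L0 : ℝ := (n:ℝ) * (2 * Bv * Cw + 4 * Be * Bv) with hL0def
  have hL00 : 0 ≤ L0 := by positivity
  have hqlip : ∀ i (x y : ℝ), t₀ ≤ x → t₀ ≤ y → ‖q i y - q i x‖ ≤ Bv * |y - x| := by
    intro i x y hx hy
    have := Convex.norm_image_sub_le_of_norm_deriv_le (f := q i) (s := Set.Ici t₀)
      (fun z _ => (hqdiff i) z) (fun z hz => hvb i z hz) (convex_Ici t₀) hx hy
    simpa [Real.norm_eq_abs] using this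
  have hvlip : ∀ i (x y : ℝ), t₀ ≤ x → t₀ ≤ y →
      ‖deriv (q i) y - deriv (q i) x‖ ≤ Cw * |y - x| := by
    intro i x y hx hy
    have := Convex.norm_image_sub_le_of_norm_deriv_le (f := deriv (q i)) (s := Set.Ici t₀)
      (fun z _ => (hvdiff i) z) (fun z hz => hwb i z hz) (convex_Ici t₀) hx hy
    simpa [Real.norm_eq_abs] using this
  have hGlip : ∀ s t : ℝ, t₀ ≤ s → t₀ ≤ t → |G s - G t| ≤ L0 * |s - t| := by
    intro s t hs ht
    have hper : ∀ i : Fin n,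
        |(‖deriv (q i) s‖^2 + ‖q i s - P i (q i s)‖^2)
          - (‖deriv (q i) t‖^2 + ‖q i t - P i (q i t)‖^2)|
        ≤ (2 * Bv * Cw + 4 * Be * Bv) * |s - t| := by
      intro i
      have hv2 : |‖deriv (q i) s‖^2 - ‖deriv (q i) t‖^2| ≤ 2 * Bv * Cw * |s - t| := by
        have h1 : |‖deriv (q i) s‖ - ‖deriv (q i) t‖| ≤ Cw * |s - t| := by
          calc |‖deriv (q i) s‖ - ‖deriv (q i) t‖| ≤ ‖deriv (q i) s - deriv (q i) t‖ :=
            abs_norm_sub_norm_le _ _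
          _ ≤ Cw * |s - t| := hvlip i t s ht hs
        have h2 : ‖deriv (q i) s‖ + ‖deriv (q i) t‖ ≤ 2 * Bv := by
          linarith [hvb i s hs, hvb i t ht]
        have h3 : ‖deriv (q i) s‖^2 - ‖deriv (q i) t‖^2
            = (‖deriv (q i) s‖ - ‖deriv (q i) t‖) * (‖deriv (q i) s‖ + ‖deriv (q i) t‖) := by
          ring
        rw [h3, abs_mul]
        have h4 : |‖deriv (q i) s‖ + ‖deriv (q i) t‖| ≤ 2 * Bv := by
          rw [abs_of_nonneg (by positivity)]; exact h2
        calc |‖deriv (q i) s‖ - ‖deriv (q i) t‖| * |‖deriv (q i) s‖ + ‖deriv (q i) t‖|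
            ≤ (Cw * |s - t|) * (2 * Bv) :=
          mul_le_mul h1 h4 (abs_nonneg _) (by positivity)
        _ = 2 * Bv * Cw * |s - t| := by ring
      have hf2 : |‖q i s - P i (q i s)‖^2 - ‖q i t - P i (q i t)‖^2|
          ≤ 4 * Be * Bv * |s - t| := by
        have h1 : |‖q i s - P i (q i s)‖ - ‖q i t - P i (q i t)‖|
            ≤ 2 * Bv * |s - t| := by
          calc |‖q i s - P i (q i s)‖ - ‖q i t - P i (q i t)‖|
              ≤ ‖(q i s - P i (q i s)) - (q i t - P i (q i t))‖ := abs_norm_sub_norm_le _ _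
          _ ≤ 2 * ‖q i s - q i t‖ := hflip i (q i s) (q i t)
          _ ≤ 2 * (Bv * |s - t|) := by
            have := hqlip i t s ht hs
            linarith
          _ = 2 * Bv * |s - t| := by ring
        have h2 : ‖q i s - P i (q i s)‖ + ‖q i t - P i (q i t)‖ ≤ 2 * Be := by
          linarith [hfb i s hs, hfb i t ht]
        have h3 : ‖q i s - P i (q i s)‖^2 - ‖q i t - P i (q i t)‖^2
            = (‖q i s - P i (q i s)‖ - ‖q i t - P i (q i t)‖)
              * (‖q i s - P i (q i s)‖ + ‖q i t - P i (q i t)‖) := by ring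
        rw [h3, abs_mul]
        have h4 : |‖q i s - P i (q i s)‖ + ‖q i t - P i (q i t)‖| ≤ 2 * Be := by
          rw [abs_of_nonneg (by positivity)]; exact h2
        calc |‖q i s - P i (q i s)‖ - ‖q i t - P i (q i t)‖|
              * |‖q i s - P i (q i s)‖ + ‖q i t - P i (q i t)‖|
            ≤ (2 * Bv * |s - t|) * (2 * Be) :=
          mul_le_mul h1 h4 (abs_nonneg _) (by positivity)
        _ = 4 * Be * Bv * |s - t| := by ring
      calc |(‖deriv (q i) s‖^2 + ‖q i s - P i (q i s)‖^2)
          - (‖deriv (q i) t‖^2 + ‖q i t - P i (q i t)‖^2)|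
          ≤ |‖deriv (q i) s‖^2 - ‖deriv (q i) t‖^2|
            + |‖q i s - P i (q i s)‖^2 - ‖q i t - P i (q i t)‖^2| := by
            have := abs_add_le (‖deriv (q i) s‖^2 - ‖deriv (q i) t‖^2)
              (‖q i s - P i (q i s)‖^2 - ‖q i t - P i (q i t)‖^2)
            have heq : (‖deriv (q i) s‖^2 + ‖q i s - P i (q i s)‖^2)
                - (‖deriv (q i) t‖^2 + ‖q i t - P i (q i t)‖^2)
                = (‖deriv (q i) s‖^2 - ‖deriv (q i) t‖^2)
                  + (‖q i s - P i (q i s)‖^2 - ‖q i t - P i (q i t)‖^2) := by ring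
            rw [heq]; exact this
      _ ≤ (2 * Bv * Cw + 4 * Be * Bv) * |s - t| := by linarith
    have hsplit : G s - G t = ∑ i, ((‖deriv (q i) s‖^2 + ‖q i s - P i (q i s)‖^2)
        - (‖deriv (q i) t‖^2 + ‖q i t - P i (q i t)‖^2)) := by
      rw [hGdef, ← Finset.sum_sub_distrib]
    rw [hsplit]
    calc |∑ i, ((‖deriv (q i) s‖^2 + ‖q i s - P i (q i s)‖^2)
        - (‖deriv (q i) t‖^2 + ‖q i t - P i (q i t)‖^2))|
        ≤ ∑ i, |(‖deriv (q i) s‖^2 + ‖q i s - P i (q i s)‖^2)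
          - (‖deriv (q i) t‖^2 + ‖q i t - P i (q i t)‖^2)| := Finset.abs_sum_le_sum_abs _ _
    _ ≤ ∑ _i : Fin n, (2 * Bv * Cw + 4 * Be * Bv) * |s - t| :=
      Finset.sum_le_sum fun i _ => hper i
    _ = L0 * |s - t| := by
      rw [Finset.sum_const, Finset.card_univ, Fintype.card_fin, nsmul_eq_mul, hL0def]; ring
  -- continuity
  have hGcont : Continuous G := by
    refine continuous_finset_sum _ fun i _ => Continuous.add ?_ ?_
    · exact ((hvcont i).norm).pow 2
    · exact (((hqcont i).sub ((hPcont i).comp (hqcont i))).norm).pow 2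
  have hVdcont : Continuous Vd := by
    refine continuous_finset_sum _ fun i _ => ?_
    refine Continuous.add (Continuous.add (Continuous.add ?_ ?_) ?_) ?_
    · exact (hvcont i).inner (hwcont i)
    · exact (hvcont i).inner (hvcont i)
    · exact ((hqcont i).sub continuous_const).inner (hwcont i)
    · exact continuous_const.mul (((hqcont i).sub continuous_const).inner (hvcont i))
  -- the integral bound
  have hVnn : ∀ u, 0 ≤ V u := fun u => le_trans (Finset.sum_nonneg fun i _ =>
    add_nonneg (by positivity) (mul_nonneg hkh (by positivity))) (hVlow u)
  have hint : ∀ T, t₀ ≤ T → (∫ t in t₀..T, G t) ≤ 2 * V0 := by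
    intro T hT
    have hVdInt : IntervalIntegrable Vd MeasureTheory.volume t₀ T :=
      hVdcont.intervalIntegrable _ _
    have hGInt : IntervalIntegrable G MeasureTheory.volume t₀ T :=
      hGcont.intervalIntegrable _ _
    have hFTC : ∫ t in t₀..T, Vd t = V T - V t₀ :=
      intervalIntegral.integral_eq_sub_of_hasDerivAt (fun x _ => hVD x) hVdInt
    have hmono2 : (∫ t in t₀..T, G t) ≤ ∫ t in t₀..T, (-2 : ℝ) * Vd t := by
      refine intervalIntegral.integral_mono_on hT hGInt
        ((continuous_const.mul hVdcont).intervalIntegrable _ _) fun x hx => ?_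
      have := hVd_le x hx.1
      linarith
    have heval : (∫ t in t₀..T, (-2:ℝ) * Vd t) = -2 * (V T - V t₀) := by
      rw [intervalIntegral.integral_const_mul, hFTC]
    have hVT := hVnn T
    rw [heval] at hmono2
    rw [hV0def]
    linarith
  -- extend G to a globally Lipschitz function and apply Barbalat
  have hGtend : Filter.Tendsto G Filter.atTop (𝓝 0) := by
    set G' : ℝ → ℝ := fun t => G (max t t₀) with hG'def
    have h0' : ∀ t, 0 ≤ G' t := fun t => hGnn _
    have hlip' : ∀ s t : ℝ, |G' s - G' t| ≤ (L0 + 1) * |s - t| := by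
      intro s t
      calc |G' s - G' t| ≤ L0 * |max s t₀ - max t t₀| :=
        hGlip _ _ (le_max_right _ _) (le_max_right _ _)
      _ ≤ L0 * |s - t| := by
        have := abs_max_sub_max_le_abs s t t₀
        exact mul_le_mul_of_nonneg_left this hL00
      _ ≤ (L0 + 1) * |s - t| := by
        have := abs_nonneg (s - t); nlinarith
    have hint' : ∀ T, t₀ ≤ T → (∫ t in t₀..T, G' t) ≤ 2 * V0 := by
      intro T hT
      have : ∫ t in t₀..T, G' t = ∫ t in t₀..T, G t := by
        apply intervalIntegral.integral_congr
        intro x hx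
        rw [Set.uIcc_of_le hT] at hx
        simp only [hG'def]
        rw [max_eq_left hx.1]
      rw [this]; exact hint T hT
    have hbar := aux_barbalat G' t₀ (2 * V0) (L0 + 1) (by linarith) h0' hlip' hint'
    refine hbar.congr' ?_
    filter_upwards [Filter.eventually_ge_atTop t₀] with t ht
    simp only [hG'def]
    rw [max_eq_left ht]
  have hsqrtG : Filter.Tendsto (fun t => Real.sqrt (G t)) Filter.atTop (𝓝 0) := by
    have := hGtend.sqrt
    simpa using this
  constructor
  · intro i
    refine squeeze_zero (fun t => Metric.infDist_nonneg) (fun t => ?_) hsqrtG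
    calc Metric.infDist (q i t) (X i) ≤ dist (q i t) (P i (q i t)) :=
      Metric.infDist_le_dist_of_mem (hPmem i (q i t))
    _ = ‖q i t - P i (q i t)‖ := dist_eq_norm _ _
    _ = Real.sqrt (‖q i t - P i (q i t)‖^2) := (Real.sqrt_sq (norm_nonneg _)).symm
    _ ≤ Real.sqrt (G t) := Real.sqrt_le_sqrt (by nlinarith [hGsingle i t, sq_nonneg (‖deriv (q i) t‖)])
  · intro i
    rw [tendsto_zero_iff_norm_tendsto_zero]
    refine squeeze_zero (fun t => norm_nonneg _) (fun t => ?_) hsqrtG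
    calc ‖deriv (q i) t‖ = Real.sqrt (‖deriv (q i) t‖^2) := (Real.sqrt_sq (norm_nonneg _)).symm
    _ ≤ Real.sqrt (G t) := Real.sqrt_le_sqrt (by nlinarith [hGsingle i t, sq_nonneg (‖q i t - P i (q i t)‖)])
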